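/- For a fixed integer ω ≥ 0, n > 2ω+1, and any l ≥ 0, the number of Ω^ω-trees of size n with exactly l cherries satisfies |Ω^ω_{n,l}| = sum over k from 0 to ω and j from 0 to ⌈k/2⌉ of C(n-1,k) * |Ω^ω_{n-1-k, l-j}| * e_{k,j}, where e_{k,j} is the number of ranked trees of size k with j cherries. -/

import Mathlib

/-!
Common definitions: plane (ordered) labeled binary trees, the flip relation
generating the "unordered" identification, ranked trees, Ω-trees, and counts.
-/

/-- Plane rooted binary trees whose internal nodes carry a label. -/
inductive PTree : Type where
  | leaf : PTree
  | node : ℕ → PTree → PTree → PTree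
deriving DecidableEq

namespace PTree

/-- Size: the number of internal nodes. -/
def size : PTree → ℕ
  | leaf => 0
  | node _ l r => l.size + r.size + 1

/-- Number of cherries: internal nodes whose two children are leaves. -/
def cherries : PTree → ℕ
  | leaf => 0
  | node _ leaf leaf => 1
  | node _ l r => l.cherries + r.cherries

/-- Multiset of labels of internal nodes. -/
def labels : PTree → Multiset ℕ
  | leaf => 0
  | node k l r => k ::ₘ (l.labels + r.labels)

/-- Labels increase away from the root: each internal node's label is smaller
than all labels in its subtrees. -/
def Incr : PTree → Prop
  | leaf => True
  | node k l r =>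
      (∀ m ∈ l.labels, k < m) ∧ (∀ m ∈ r.labels, k < m) ∧ Incr l ∧ Incr r

/-- A ranked tree of size `n`: labels increase from the root and the internal
labels are exactly `{1, …, n}` (each occurring once). -/
def IsRanked (n : ℕ) (t : PTree) : Prop :=
  t.Incr ∧ t.labels = (Finset.Icc 1 n).val

/-- The Ω-condition: at every internal node, the smaller of the two child
subtrees has at most `ω` internal nodes. -/
def OmegaOK (ω : ℕ) : PTree → Prop
  | leaf => True
  | node _ l r => min l.size r.size ≤ ω ∧ OmegaOK ω l ∧ OmegaOK ω r

/-- One-step flip: swap the two children of some internal node. -/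
inductive Flip : PTree → PTree → Prop
  | swap (k : ℕ) (l r : PTree) : Flip (node k l r) (node k r l)
  | congL {l l' : PTree} (k : ℕ) (r : PTree) : Flip l l' → Flip (node k l r) (node k l' r)
  | congR {r r' : PTree} (k : ℕ) (l : PTree) : Flip r r' → Flip (node k l r) (node k l r')

lemma cherries_node {a b : PTree} (k : ℕ) (h : ¬(a = leaf ∧ b = leaf)) :
    cherries (node k a b) = cherries a + cherries b := by
  cases a <;> cases b <;> simp_all [cherries]

lemma cherries_le (t : PTree) : cherries t ≤ (size t + 1) / 2 := by
  induction t with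
  | leaf => simp [cherries, size]
  | node k a b iha ihb =>
    by_cases h : a = leaf ∧ b = leaf
    · obtain ⟨rfl, rfl⟩ := h; simp [cherries, size]
    · rw [cherries_node k h]
      have : cherries a + cherries b ≤ (size a + 1) / 2 + (size b + 1) / 2 :=
        Nat.add_le_add iha ihb
      refine this.trans ?_
      simp only [size]
      omega

/-- preorder flattening with leaf markers -/
def flat : PTree → List (WithBot ℕ)
  | leaf => [⊥]
  | node k l r => (k : WithBot ℕ) :: (flat l ++ flat r)

lemma flat_ne_nil (t : PTree) : flat t ≠ [] := by cases t <;> simp [flat]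

lemma flat_append_inj : ∀ (t₁ t₂ : PTree) (s₁ s₂ : List (WithBot ℕ)),
    flat t₁ ++ s₁ = flat t₂ ++ s₂ → t₁ = t₂ ∧ s₁ = s₂ := by
  intro t₁
  induction t₁ with
  | leaf => intro t₂ s₁ s₂ h; cases t₂ with
    | leaf => simpa [flat] using h
    | node k l r =>
      simp only [flat, List.cons_append, List.cons.injEq] at h
      exact absurd h.1 (by simp)
  | node k l r ihl ihr =>
    intro t₂ s₁ s₂ h
    cases t₂ with
    | leaf =>
      simp only [flat, List.cons_append, List.cons.injEq] at h
      exact absurd h.1 (by simp)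
    | node k' l' r' =>
      simp only [flat, List.cons_append, List.cons.injEq] at h
      obtain ⟨hk, h2⟩ := h
      rw [List.append_assoc, List.append_assoc] at h2
      obtain ⟨rfl, h3⟩ := ihl l' _ _ h2
      obtain ⟨rfl, rfl⟩ := ihr r' _ _ h3
      have : k = k' := by exact_mod_cast hk
      exact ⟨by rw [this], rfl⟩

lemma flat_inj {t₁ t₂ : PTree} (h : flat t₁ = flat t₂) : t₁ = t₂ := by
  have := flat_append_inj t₁ t₂ [] [] (by simpa using h)
  exact this.1

/-- canonical sorting: at each node put the lexicographically smaller flattening left -/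
def sort : PTree → PTree
  | leaf => leaf
  | node k l r =>
      let l' := sort l
      let r' := sort r
      if flat l' ≤ flat r' then node k l' r' else node k r' l'

lemma sort_idem (t : PTree) : sort (sort t) = sort t := by
  induction t with
  | leaf => rfl
  | node k l r ihl ihr =>
    simp only [sort]
    by_cases h : flat (sort l) ≤ flat (sort r)
    · simp only [if_pos h, sort, ihl, ihr, if_pos h]
    · simp only [if_neg h, sort, ihl, ihr]
      rw [if_pos (le_of_not_ge h)]

lemma sort_flip {t t' : PTree} (h : Flip t t') : sort t = sort t' := by
  induction h with
  | swap k l r =>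
    simp only [sort]
    rcases lt_trichotomy (flat (sort l)) (flat (sort r)) with h | h | h
    · rw [if_pos h.le, if_neg (not_le.2 h)]
    · rw [flat_inj h]
    · rw [if_neg (not_le.2 h), if_pos h.le]
  | congL k r _ ih => simp only [sort, ih]
  | congR k l _ ih => simp only [sort, ih]

lemma eqvGen_congL {l l' : PTree} (k : ℕ) (r : PTree)
    (h : Relation.EqvGen Flip l l') : Relation.EqvGen Flip (node k l r) (node k l' r) := by
  induction h with
  | rel a b hab => exact Relation.EqvGen.rel _ _ (Flip.congL k r hab)
  | refl a => exact Relation.EqvGen.refl _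
  | symm a b _ ih => exact ih.symm _ _
  | trans a b c _ _ ih1 ih2 => exact ih1.trans _ _ _ ih2

lemma eqvGen_congR {r r' : PTree} (k : ℕ) (l : PTree)
    (h : Relation.EqvGen Flip r r') : Relation.EqvGen Flip (node k l r) (node k l r') := by
  induction h with
  | rel a b hab => exact Relation.EqvGen.rel _ _ (Flip.congR k l hab)
  | refl a => exact Relation.EqvGen.refl _
  | symm a b _ ih => exact ih.symm _ _
  | trans a b c _ _ ih1 ih2 => exact ih1.trans _ _ _ ih2

lemma eqvGen_sort (t : PTree) : Relation.EqvGen Flip t (sort t) := by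
  induction t with
  | leaf => exact Relation.EqvGen.refl _
  | node k l r ihl ihr =>
    have h1 : Relation.EqvGen Flip (node k l r) (node k (sort l) (sort r)) :=
      (eqvGen_congL k r ihl).trans _ _ _ (eqvGen_congR k (sort l) ihr)
    simp only [sort]
    by_cases h : flat (sort l) ≤ flat (sort r)
    · rw [if_pos h]; exact h1
    · rw [if_neg h]
      exact h1.trans _ _ _ (Relation.EqvGen.rel _ _ (Flip.swap k _ _))

lemma eqvGen_sort_eq {t t' : PTree} (h : Relation.EqvGen Flip t t') : sort t = sort t' := by
  induction h with
  | rel a b hab => exact sort_flip hab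
  | refl a => rfl
  | symm a b _ ih => exact ih.symm
  | trans a b c _ _ ih1 ih2 => exact ih1.trans ih2



lemma size_flip {t t' : PTree} (h : Flip t t') : size t = size t' := by
  induction h with
  | swap k l r => simp [size]; omega
  | congL k r _ ih => simp [size, ih]
  | congR k l _ ih => simp [size, ih]

lemma flip_ne_leaf {t t' : PTree} (h : Flip t t') : t ≠ leaf ∧ t' ≠ leaf := by
  cases h <;> simp

lemma cherries_flip {t t' : PTree} (h : Flip t t') : cherries t = cherries t' := by
  induction h with
  | swap k l r => cases l <;> cases r <;> simp [cherries] <;> omega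
  | @congL l l' k r hf ih =>
    rw [cherries_node k (fun h => flip_ne_leaf hf |>.1 h.1),
      cherries_node k (fun h => flip_ne_leaf hf |>.2 h.1), ih]
  | @congR r r' k l hf ih =>
    rw [cherries_node k (fun h => flip_ne_leaf hf |>.1 h.2),
      cherries_node k (fun h => flip_ne_leaf hf |>.2 h.2), ih]

lemma labels_flip {t t' : PTree} (h : Flip t t') : labels t = labels t' := by
  induction h with
  | swap k l r => simp [labels]; rw [add_comm]
  | congL k r _ ih => simp [labels, ih]
  | congR k l _ ih => simp [labels, ih]

lemma incr_flip {t t' : PTree} (h : Flip t t') : Incr t → Incr t' := by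
  induction h with
  | swap k l r => intro ⟨h1, h2, h3, h4⟩; exact ⟨h2, h1, h4, h3⟩
  | @congL l l' k r hf ih =>
    intro ⟨h1, h2, h3, h4⟩
    exact ⟨by rw [← labels_flip hf]; exact h1, h2, ih h3, h4⟩
  | @congR r r' k l hf ih =>
    intro ⟨h1, h2, h3, h4⟩
    exact ⟨h1, by rw [← labels_flip hf]; exact h2, h3, ih h4⟩

lemma omegaOK_flip {ω : ℕ} {t t' : PTree} (h : Flip t t') : OmegaOK ω t → OmegaOK ω t' := by
  induction h with
  | swap k l r => intro ⟨h1, h2, h3⟩; exact ⟨by rwa [min_comm], h3, h2⟩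
  | @congL l l' k r hf ih =>
    intro ⟨h1, h2, h3⟩
    exact ⟨by rwa [← size_flip hf], ih h2, h3⟩
  | @congR r r' k l hf ih =>
    intro ⟨h1, h2, h3⟩
    exact ⟨by rwa [← size_flip hf], h2, ih h3⟩

lemma flip_symm {t t' : PTree} (h : Flip t t') : Flip t' t := by
  induction h with
  | swap k l r => exact Flip.swap k r l
  | congL k r _ ih => exact Flip.congL k r ih
  | congR k l _ ih => exact Flip.congR k l ih

lemma eqvGen_eq {α : Type*} {f : PTree → α} (hf : ∀ {t t'}, Flip t t' → f t = f t')
    {t u : PTree} (h : Relation.EqvGen Flip t u) : f t = f u := by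
  induction h with
  | rel a b hab => exact hf hab
  | refl a => rfl
  | symm a b _ ih => exact ih.symm
  | trans a b c _ _ ih1 ih2 => exact ih1.trans ih2

lemma eqvGen_iff {P : PTree → Prop} (hP : ∀ {t t'}, Flip t t' → P t → P t')
    {t u : PTree} (h : Relation.EqvGen Flip t u) : P t ↔ P u := by
  induction h with
  | rel a b hab => exact ⟨hP hab, hP (flip_symm hab)⟩
  | refl a => exact Iff.rfl
  | symm a b _ ih => exact ih.symm
  | trans a b c _ _ ih1 ih2 => exact ih1.trans ih2

lemma size_sort (t : PTree) : size (sort t) = size t :=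
  (eqvGen_eq (fun h => size_flip h) (eqvGen_sort t)).symm

lemma cherries_sort (t : PTree) : cherries (sort t) = cherries t :=
  (eqvGen_eq (fun h => cherries_flip h) (eqvGen_sort t)).symm

lemma labels_sort (t : PTree) : labels (sort t) = labels t :=
  (eqvGen_eq (fun h => labels_flip h) (eqvGen_sort t)).symm

lemma incr_sort {t : PTree} (h : Incr t) : Incr (sort t) :=
  (eqvGen_iff (fun h => incr_flip h) (eqvGen_sort t)).1 h

lemma omegaOK_sort {ω : ℕ} {t : PTree} (h : OmegaOK ω t) : OmegaOK ω (sort t) :=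
  (eqvGen_iff (fun h => omegaOK_flip h) (eqvGen_sort t)).1 h


end PTree

/-- Setoid on trees satisfying `P`, identifying trees up to swapping children
(so that left/right order is immaterial). -/
def treeSetoid (P : PTree → Prop) : Setoid {t : PTree // P t} :=
  Relation.EqvGen.setoid (fun a b => PTree.Flip a.1 b.1)

/-- `|R_n|` : the number of ranked trees (histories) of size `n`. -/
noncomputable def rankedCount (n : ℕ) : ℕ :=
  Nat.card (Quotient (treeSetoid (PTree.IsRanked n)))

/-- `e_{n,l}` : the number of ranked trees of size `n` with `l` cherries. -/
noncomputable def rankedCountC (n l : ℕ) : ℕ :=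
  Nat.card (Quotient (treeSetoid (fun t => PTree.IsRanked n t ∧ t.cherries = l)))

/-- `|Ω^ω_n|` : the number of Ω^ω-trees of size `n`. -/
noncomputable def omegaCount (ω n : ℕ) : ℕ :=
  Nat.card (Quotient (treeSetoid (fun t => PTree.IsRanked n t ∧ PTree.OmegaOK ω t)))

/-- `|Ω^ω_{n,l}|` : the number of Ω^ω-trees of size `n` with `l` cherries. -/
noncomputable def omegaCountC (ω n l : ℕ) : ℕ :=
  Nat.card (Quotient (treeSetoid
    (fun t => PTree.IsRanked n t ∧ PTree.OmegaOK ω t ∧ t.cherries = l)))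



namespace PTree

/-- lift EqvGen on underlying trees to the subtype, given flip-invariance of `P`. -/
lemma eqvGen_subtype {P : PTree → Prop} (hP : ∀ {t t'}, Flip t t' → P t → P t')
    {t u : PTree} (h : Relation.EqvGen Flip t u) :
    ∀ (ht : P t) (hu : P u),
      Relation.EqvGen (fun a b : {t : PTree // P t} => Flip a.1 b.1) ⟨t, ht⟩ ⟨u, hu⟩ := by
  induction h with
  | rel a b hab => exact fun ht hu => Relation.EqvGen.rel _ _ hab
  | refl a => exact fun ht hu => Relation.EqvGen.refl _
  | symm a b hab ih => exact fun ht hu => (ih hu ht).symm _ _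
  | trans a b c hab hbc ih1 ih2 =>
    intro ht hu
    have hb : P b := (eqvGen_iff hP hab).1 ht
    exact (ih1 ht hb).trans _ _ _ (ih2 hb hu)

lemma eqvGen_down {P : PTree → Prop} {a b : {t : PTree // P t}}
    (h : Relation.EqvGen (fun a b : {t : PTree // P t} => Flip a.1 b.1) a b) :
    Relation.EqvGen Flip a.1 b.1 := by
  induction h with
  | rel x y hxy => exact Relation.EqvGen.rel _ _ hxy
  | refl x => exact Relation.EqvGen.refl _
  | symm x y _ ih => exact ih.symm _ _
  | trans x y z _ _ ih1 ih2 => exact ih1.trans _ _ _ ih2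

/-- The quotient by flips of a flip-invariant family is equinumerous with canonical trees. -/
noncomputable def quotEquivCanon {P : PTree → Prop} (hP : ∀ {t t'}, Flip t t' → P t → P t') :
    Quotient (treeSetoid P) ≃ {t : PTree // P t ∧ sort t = t} where
  toFun := Quotient.lift
    (fun a : {t : PTree // P t} =>
      (⟨sort a.1, (eqvGen_iff hP (eqvGen_sort a.1)).1 a.2, sort_idem a.1⟩ :
        {t : PTree // P t ∧ sort t = t}))
    (fun a b hab => Subtype.ext (eqvGen_sort_eq (eqvGen_down hab)))
  invFun := fun b => Quotient.mk _ ⟨b.1, b.2.1⟩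
  left_inv := by
    refine Quotient.ind ?_
    intro a
    refine Quotient.sound ?_
    exact eqvGen_subtype hP ((eqvGen_sort a.1).symm _ _) _ a.2
  right_inv := by
    rintro ⟨b, hb, hc⟩
    exact Subtype.ext hc

/-- enumeration of all trees of size ≤ N with labels < M -/
def allT : ℕ → ℕ → Finset PTree
  | 0, _ => {leaf}
  | N+1, M => insert leaf
      (((Finset.range M) ×ˢ ((allT N M) ×ˢ (allT N M))).image fun p => node p.1 p.2.1 p.2.2)

lemma mem_allT {M : ℕ} : ∀ {N : ℕ} {t : PTree}, size t ≤ N → (∀ m ∈ labels t, m < M) →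
    t ∈ allT N M := by
  intro N
  induction N with
  | zero =>
    intro t hs _
    cases t with
    | leaf => simp [allT]
    | node k l r => simp [size] at hs
  | succ N ih =>
    intro t hs hl
    cases t with
    | leaf => simp [allT]
    | node k l r =>
      simp only [allT, Finset.mem_insert, Finset.mem_image, Finset.mem_product]
      refine Or.inr ⟨⟨k, l, r⟩, ⟨?_, ?_, ?_⟩, rfl⟩
      · exact Finset.mem_range.2 (hl k (by simp [labels]))
      · show l ∈ allT N M
        exact ih (by simp [size] at hs; omega)
          (fun m hm => hl m (by simp only [labels, Multiset.mem_cons, Multiset.mem_add]; tauto))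
      · show r ∈ allT N M
        exact ih (by simp [size] at hs; omega)
          (fun m hm => hl m (by simp only [labels, Multiset.mem_cons, Multiset.mem_add]; tauto))

lemma size_eq_labels_card (t : PTree) : size t = Multiset.card (labels t) := by
  induction t with
  | leaf => rfl
  | node k l r ihl ihr => simp [size, labels, ihl, ihr]; try omega

/-- Counting: `Nat.card` of the quotient equals the number of canonical representatives,
as a `Finset.card` inside the enumeration. -/
lemma card_quot {P : PTree → Prop} (hP : ∀ {t t'}, Flip t t' → P t → P t')
    {N M : ℕ} (hb : ∀ t, P t → size t ≤ N ∧ ∀ m ∈ labels t, m < M) :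
    Nat.card (Quotient (treeSetoid P)) =
      (@Finset.filter _ (fun t => P t ∧ sort t = t)
        (Classical.decPred _) (allT N M)).card := by
  classical
  calc Nat.card (Quotient (treeSetoid P))
      = Nat.card {t : PTree // P t ∧ sort t = t} := Nat.card_congr (quotEquivCanon hP)
    _ = Nat.card {t : PTree //
          t ∈ (allT N M).filter (fun t => P t ∧ sort t = t)} := by
        refine Nat.card_congr (Equiv.subtypeEquivRight (fun t => ?_))
        simp only [Finset.mem_filter]
        exact ⟨fun h => ⟨mem_allT (hb t h.1).1 (hb t h.1).2, h⟩, fun h => h.2⟩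
    _ = _ := by
        rw [Nat.card_eq_finsetCard]
        congr 1
        exact @Finset.filter_congr_decidable _ _ _ _ (Classical.decPred _)


end PTree

namespace PTree

/-- relabeling -/
def mapl (f : ℕ → ℕ) : PTree → PTree
  | leaf => leaf
  | node k l r => node (f k) (mapl f l) (mapl f r)

@[simp] lemma size_mapl (f : ℕ → ℕ) (t : PTree) : size (mapl f t) = size t := by
  induction t with
  | leaf => rfl
  | node k l r ihl ihr => simp [mapl, size, ihl, ihr]

@[simp] lemma cherries_mapl (f : ℕ → ℕ) (t : PTree) : cherries (mapl f t) = cherries t := by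
  induction t with
  | leaf => rfl
  | node k l r ihl ihr => cases l <;> cases r <;> simp_all [mapl, cherries]

@[simp] lemma labels_mapl (f : ℕ → ℕ) (t : PTree) :
    labels (mapl f t) = (labels t).map f := by
  induction t with
  | leaf => rfl
  | node k l r ihl ihr => simp [mapl, labels, ihl, ihr]

lemma omegaOK_mapl {ω : ℕ} (f : ℕ → ℕ) {t : PTree} (h : OmegaOK ω t) :
    OmegaOK ω (mapl f t) := by
  induction t with
  | leaf => trivial
  | node k l r ihl ihr =>
    obtain ⟨h1, h2, h3⟩ := h
    exact ⟨by simpa using h1, ihl h2, ihr h3⟩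

lemma incr_mapl {f : ℕ → ℕ} {t : PTree}
    (hf : ∀ a ∈ labels t, ∀ b ∈ labels t, a < b → f a < f b) (h : Incr t) :
    Incr (mapl f t) := by
  induction t with
  | leaf => trivial
  | node k l r ihl ihr =>
    obtain ⟨h1, h2, h3, h4⟩ := h
    have hk : k ∈ labels (node k l r) := by simp [labels]
    have hmem : ∀ m, m ∈ labels l ∨ m ∈ labels r → m ∈ labels (node k l r) := by
      intro m hm; simp [labels]; tauto
    refine ⟨?_, ?_, ?_, ?_⟩
    · intro m hm
      simp only [labels_mapl, Multiset.mem_map] at hm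
      obtain ⟨a, ha, rfl⟩ := hm
      exact hf k hk a (hmem a (Or.inl ha)) (h1 a ha)
    · intro m hm
      simp only [labels_mapl, Multiset.mem_map] at hm
      obtain ⟨a, ha, rfl⟩ := hm
      exact hf k hk a (hmem a (Or.inr ha)) (h2 a ha)
    · exact ihl (fun a ha b hb => hf a (hmem a (Or.inl ha)) b (hmem b (Or.inl hb))) h3
    · exact ihr (fun a ha b hb => hf a (hmem a (Or.inr ha)) b (hmem b (Or.inr hb))) h4

@[simp] lemma flat_mapl (f : ℕ → ℕ) (t : PTree) :
    flat (mapl f t) = (flat t).map (WithBot.map f) := by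
  induction t with
  | leaf => rfl
  | node k l r ihl ihr => simp [mapl, flat, ihl, ihr]; rfl

lemma coe_mem_flat {m : ℕ} {t : PTree} : (m : WithBot ℕ) ∈ flat t ↔ m ∈ labels t := by
  induction t with
  | leaf => simp [flat, labels]
  | node k l r ihl ihr =>
    simp [flat, labels, ihl, ihr]

lemma lex_map_of_lex {f : ℕ → ℕ} : ∀ {u v : List (WithBot ℕ)},
    List.Lex (· < ·) u v →
    (∀ a b : ℕ, (a : WithBot ℕ) ∈ u → (b : WithBot ℕ) ∈ v → a < b → f a < f b) →
    List.Lex (· < ·) (u.map (WithBot.map f)) (v.map (WithBot.map f)) := by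
  intro u v h
  induction h with
  | nil => intro _; exact List.Lex.nil
  | @cons a l₁ l₂ _ ih =>
    intro hf
    exact List.Lex.cons (ih (fun a b ha hb => hf a b (by simp [ha]) (by simp [hb])))
  | @rel a l₁ b l₂ hab =>
    intro hf
    refine List.Lex.rel ?_
    match a, b, hab with
    | ⊥, (b : ℕ), _ => exact WithBot.bot_lt_coe _
    | (a : ℕ), (b : ℕ), hab =>
      have h1 : a < b := by exact_mod_cast hab
      have h2 := hf a b (by simp) (by simp) h1
      show (WithBot.map f (WithBot.some a)) < WithBot.map f (WithBot.some b)
      exact WithBot.coe_lt_coe.2 h2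

lemma lt_map_iff {f : ℕ → ℕ} {u v : List (WithBot ℕ)}
    (hf : ∀ a b : ℕ, ((a : WithBot ℕ) ∈ u ∨ (a : WithBot ℕ) ∈ v) →
      ((b : WithBot ℕ) ∈ u ∨ (b : WithBot ℕ) ∈ v) → a < b → f a < f b) :
    u.map (WithBot.map f) < v.map (WithBot.map f) ↔ u < v := by
  constructor
  · intro h
    rcases lt_trichotomy u v with h' | rfl | h'
    · exact h'
    · exact absurd h (lt_irrefl _)
    · have : v.map (WithBot.map f) < u.map (WithBot.map f) :=
        lex_map_of_lex h' (fun a b ha hb => hf a b (Or.inr ha) (Or.inl hb))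
      exact absurd (h.trans this) (lt_irrefl _)
  · intro h
    exact lex_map_of_lex h (fun a b ha hb => hf a b (Or.inl ha) (Or.inr hb))

lemma le_map_iff {f : ℕ → ℕ} {u v : List (WithBot ℕ)}
    (hf : ∀ a b : ℕ, ((a : WithBot ℕ) ∈ u ∨ (a : WithBot ℕ) ∈ v) →
      ((b : WithBot ℕ) ∈ u ∨ (b : WithBot ℕ) ∈ v) → a < b → f a < f b) :
    u.map (WithBot.map f) ≤ v.map (WithBot.map f) ↔ u ≤ v := by
  rw [← not_lt, ← not_lt]
  exact not_congr (lt_map_iff (fun a b ha hb => hf a b ha.symm hb.symm))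

lemma sort_mapl {f : ℕ → ℕ} {t : PTree}
    (hf : ∀ a ∈ labels t, ∀ b ∈ labels t, a < b → f a < f b) :
    sort (mapl f t) = mapl f (sort t) := by
  induction t with
  | leaf => rfl
  | node k l r ihl ihr =>
    have hmem : ∀ m, m ∈ labels l ∨ m ∈ labels r → m ∈ labels (node k l r) := by
      intro m hm; simp [labels]; tauto
    have el : sort (mapl f l) = mapl f (sort l) :=
      ihl (fun a ha b hb => hf a (hmem a (Or.inl ha)) b (hmem b (Or.inl hb)))
    have er : sort (mapl f r) = mapl f (sort r) :=
      ihr (fun a ha b hb => hf a (hmem a (Or.inr ha)) b (hmem b (Or.inr hb)))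
    have hiff : flat (mapl f (sort l)) ≤ flat (mapl f (sort r)) ↔
        flat (sort l) ≤ flat (sort r) := by
      rw [flat_mapl, flat_mapl]
      refine le_map_iff (fun a b ha hb hab => ?_)
      have ha' : a ∈ labels (node k l r) := by
        rcases ha with h | h
        · exact hmem a (Or.inl (by rwa [coe_mem_flat, labels_sort] at h))
        · exact hmem a (Or.inr (by rwa [coe_mem_flat, labels_sort] at h))
      have hb' : b ∈ labels (node k l r) := by
        rcases hb with h | h
        · exact hmem b (Or.inl (by rwa [coe_mem_flat, labels_sort] at h))
        · exact hmem b (Or.inr (by rwa [coe_mem_flat, labels_sort] at h))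
      exact hf a ha' b hb' hab
    simp only [mapl, sort, el, er]
    by_cases h : flat (sort l) ≤ flat (sort r)
    · rw [if_pos h, if_pos (hiff.2 h)]; rfl
    · rw [if_neg h, if_neg (fun hc => h (hiff.1 hc))]; rfl

lemma mapl_mapl (f g : ℕ → ℕ) (t : PTree) : mapl f (mapl g t) = mapl (f ∘ g) t := by
  induction t with
  | leaf => rfl
  | node k l r ihl ihr => simp [mapl, ihl, ihr]

lemma mapl_id_of_labels {f : ℕ → ℕ} {t : PTree} (h : ∀ m ∈ labels t, f m = m) :
    mapl f t = t := by
  induction t with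
  | leaf => rfl
  | node k l r ihl ihr =>
    have hmem : ∀ m, m ∈ labels l ∨ m ∈ labels r → m ∈ labels (node k l r) := by
      intro m hm; simp [labels]; tauto
    simp only [mapl]
    rw [h k (by simp [labels]), ihl (fun m hm => h m (hmem m (Or.inl hm))),
      ihr (fun m hm => h m (hmem m (Or.inr hm)))]

end PTree

namespace PTree

noncomputable def down (S : Finset ℕ) (m : ℕ) : ℕ :=
  if h : m ∈ S then ((S.orderIsoOfFin rfl).symm ⟨m, h⟩ : Fin S.card) + 1 else 0

noncomputable def up (S : Finset ℕ) (i : ℕ) : ℕ :=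
  if h : i - 1 < S.card then ((S.orderIsoOfFin rfl) ⟨i - 1, h⟩ : {x // x ∈ S}) else 0

lemma down_mem {S : Finset ℕ} {m : ℕ} (h : m ∈ S) : down S m ∈ Finset.Icc 1 S.card := by
  rw [down, dif_pos h]
  have := ((S.orderIsoOfFin rfl).symm ⟨m, h⟩).2
  simp [Finset.mem_Icc]

lemma up_mem {S : Finset ℕ} {i : ℕ} (h : i ∈ Finset.Icc 1 S.card) : up S i ∈ S := by
  rw [Finset.mem_Icc] at h
  rw [up, dif_pos (by omega)]
  exact ((S.orderIsoOfFin rfl) ⟨i - 1, by omega⟩).2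

lemma up_down {S : Finset ℕ} {m : ℕ} (h : m ∈ S) : up S (down S m) = m := by
  simp only [down, dif_pos h, up]
  set j : Fin S.card := (S.orderIsoOfFin rfl).symm ⟨m, h⟩ with hj
  have hjlt : (j : ℕ) < S.card := j.2
  rw [dif_pos (by omega : (j : ℕ) + 1 - 1 < S.card)]
  have : (⟨(j : ℕ) + 1 - 1, by omega⟩ : Fin S.card) = j := by
    apply Fin.ext; simp
  rw [this, hj]
  simp

lemma down_up {S : Finset ℕ} {i : ℕ} (h : i ∈ Finset.Icc 1 S.card) : down S (up S i) = i := by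
  rw [Finset.mem_Icc] at h
  have hlt : i - 1 < S.card := by omega
  simp only [up, dif_pos hlt, down]
  have hm : ((S.orderIsoOfFin rfl) ⟨i - 1, hlt⟩ : {x // x ∈ S}).1 ∈ S :=
    ((S.orderIsoOfFin rfl) ⟨i - 1, hlt⟩).2
  rw [dif_pos hm]
  have : (⟨_, hm⟩ : {x // x ∈ S}) = (S.orderIsoOfFin rfl) ⟨i - 1, hlt⟩ := rfl
  rw [this, OrderIso.symm_apply_apply]
  show (i - 1) + 1 = i
  omega

lemma down_lt {S : Finset ℕ} {a b : ℕ} (ha : a ∈ S) (hb : b ∈ S) (h : a < b) :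
    down S a < down S b := by
  simp only [down, dif_pos ha, dif_pos hb]
  have : (S.orderIsoOfFin rfl).symm ⟨a, ha⟩ < (S.orderIsoOfFin rfl).symm ⟨b, hb⟩ := by
    rw [OrderIso.lt_iff_lt]
    exact h
  have := Fin.lt_iff_val_lt_val.1 this
  omega

lemma up_lt {S : Finset ℕ} {a b : ℕ} (ha : a ∈ Finset.Icc 1 S.card)
    (hb : b ∈ Finset.Icc 1 S.card) (h : a < b) : up S a < up S b := by
  rw [Finset.mem_Icc] at ha hb
  simp only [up]
  rw [dif_pos (by omega : a - 1 < S.card), dif_pos (by omega : b - 1 < S.card)]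
  have : (S.orderIsoOfFin rfl) ⟨a - 1, by omega⟩ < (S.orderIsoOfFin rfl) ⟨b - 1, by omega⟩ := by
    rw [OrderIso.lt_iff_lt]
    exact Fin.mk_lt_mk.2 (by omega)
  exact this

lemma map_down_val {S : Finset ℕ} : S.val.map (down S) = (Finset.Icc 1 S.card).val := by
  have hinj : Set.InjOn (down S) S := by
    intro a ha b hb hab
    rcases lt_trichotomy a b with h | h | h
    · exact absurd hab (down_lt ha hb h).ne
    · exact h
    · exact absurd hab.symm (down_lt hb ha h).ne
  have himg : S.image (down S) = Finset.Icc 1 S.card := by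
    apply Finset.eq_of_subset_of_card_le
    · intro x hx
      obtain ⟨m, hm, rfl⟩ := Finset.mem_image.1 hx
      exact down_mem hm
    · rw [Finset.card_image_of_injOn hinj]
      simp
  have hnodup : (S.val.map (down S)).Nodup :=
    S.nodup.map_on (fun a ha b hb hab => hinj ha hb hab)
  calc S.val.map (down S) = (S.val.map (down S)).dedup := (Multiset.dedup_eq_self.2 hnodup).symm
    _ = (S.image (down S)).val := by rw [Finset.image_val]
    _ = _ := by rw [himg]

lemma map_up_val {S : Finset ℕ} : (Finset.Icc 1 S.card).val.map (up S) = S.val := by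
  have hinj : Set.InjOn (up S) (Finset.Icc 1 S.card) := by
    intro a ha b hb hab
    rcases lt_trichotomy a b with h | h | h
    · exact absurd hab (up_lt ha hb h).ne
    · exact h
    · exact absurd hab.symm (up_lt hb ha h).ne
  have himg : (Finset.Icc 1 S.card).image (up S) = S := by
    apply Finset.eq_of_subset_of_card_le
    · intro x hx
      obtain ⟨m, hm, rfl⟩ := Finset.mem_image.1 hx
      exact up_mem hm
    · rw [Finset.card_image_of_injOn hinj]
      simp
  have hnodup : ((Finset.Icc 1 S.card).val.map (up S)).Nodup :=
    (Finset.Icc 1 S.card).nodup.map_on (fun a ha b hb hab => hinj ha hb hab)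
  calc (Finset.Icc 1 S.card).val.map (up S)
      = ((Finset.Icc 1 S.card).val.map (up S)).dedup := (Multiset.dedup_eq_self.2 hnodup).symm
    _ = ((Finset.Icc 1 S.card).image (up S)).val := by rw [Finset.image_val]
    _ = _ := by rw [himg]

end PTree

namespace PTree

lemma size_of_isRanked {m : ℕ} {t : PTree} (h : IsRanked m t) : size t = m := by
  rw [size_eq_labels_card, h.2]
  simp

lemma labels_lt_of_isRanked {m : ℕ} {t : PTree} (h : IsRanked m t) :
    ∀ x ∈ labels t, x < m + 1 := by
  intro x hx
  rw [h.2] at hx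
  have := Finset.mem_Icc.1 (Finset.mem_def.2 hx)
  omega

lemma ne_leaf_of_size {t : PTree} (h : 1 ≤ size t) : t ≠ leaf := by
  intro rfl_h; subst rfl_h; simp [size] at h

lemma Icc_val_split {n : ℕ} (hn : 1 ≤ n) :
    (Finset.Icc 1 n).val = 1 ::ₘ (Finset.Icc 2 n).val := by
  have h1 : (1 : ℕ) ∉ Finset.Icc 2 n := by simp
  have : Finset.Icc 1 n = insert 1 (Finset.Icc 2 n) := by
    ext x; simp [Finset.mem_Icc]; omega
  rw [this, Finset.insert_val, Multiset.ndinsert_of_notMem h1]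

lemma root_one {n : ℕ} {t : PTree} (hn : 1 ≤ n) (h : IsRanked n t) :
    ∃ a b, t = node 1 a b := by
  cases t with
  | leaf =>
    exfalso
    have := size_of_isRanked h
    simp [size] at this
    omega
  | node k a b =>
    refine ⟨a, b, ?_⟩
    obtain ⟨hi, hl⟩ := h
    have hk1 : k = 1 := by
      by_contra hk
      have h1 : (1 : ℕ) ∈ labels (node k a b) := by
        rw [hl]; simp [Finset.mem_Icc]; omega
      simp only [labels, Multiset.mem_cons, Multiset.mem_add] at h1
      have hkmem : k ∈ labels (node k a b) := by simp [labels]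
      rw [hl, Finset.mem_val, Finset.mem_Icc] at hkmem
      rcases h1 with h1 | h1 | h1
      · exact hk h1.symm
      · have := hi.1 1 h1
        omega
      · have := hi.2.1 1 h1
        omega
    rw [hk1]

lemma canon_node {k : ℕ} {a b : PTree} (h : sort (node k a b) = node k a b) :
    sort a = a ∧ sort b = b := by
  rw [sort] at h
  by_cases hc : flat (sort a) ≤ flat (sort b)
  · simp only [if_pos hc] at h
    injection h with _ h1 h2
    exact ⟨h1, h2⟩
  · simp only [if_neg hc] at h
    injection h with _ h1 h2
    -- h1 : sort b = a, h2 : sort a = b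
    have h3 : sort a = sort b := by
      have := congrArg sort h2
      rwa [sort_idem] at this
    have hab : a = b := by rw [← h1, ← h3]; exact h2
    exact ⟨h2.trans hab.symm, h1.trans hab⟩

lemma nodup_split {a b : PTree} {s : Multiset ℕ} (hs : s.Nodup)
    (h : labels a + labels b = s) :
    (labels a).Nodup ∧ (labels b).Nodup ∧
    (labels a).toFinset.val = labels a ∧ (labels b).toFinset.val = labels b ∧
    (labels b).toFinset = s.toFinset \ (labels a).toFinset := by
  have hab : (labels a + labels b).Nodup := h ▸ hs
  have hna : (labels a).Nodup := (Multiset.nodup_add.1 hab).1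
  have hnb : (labels b).Nodup := (Multiset.nodup_add.1 hab).2.1
  have hdisj := (Multiset.nodup_add.1 hab).2.2
  refine ⟨hna, hnb, by rw [Multiset.toFinset_val]; exact Multiset.dedup_eq_self.2 hna,
    by rw [Multiset.toFinset_val]; exact Multiset.dedup_eq_self.2 hnb, ?_⟩
  ext x
  simp only [Finset.mem_sdiff, Multiset.mem_toFinset, ← h, Multiset.mem_add]
  constructor
  · intro hx
    exact ⟨Or.inr hx, fun hxa => (Multiset.disjoint_left.1 hdisj) hxa hx⟩
  · rintro ⟨hx | hx, hxa⟩
    · exact absurd hx hxa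
    · exact hx

lemma sdiff_val_add {S T : Finset ℕ} (h : S ⊆ T) : (T \ S).val + S.val = T.val := by
  have hd : Disjoint (T \ S) S := Finset.sdiff_disjoint
  have : (T \ S).disjUnion S hd = T := by
    rw [Finset.disjUnion_eq_union, Finset.sdiff_union_of_subset h]
  conv_rhs => rw [← this]
  rfl

end PTree

namespace PTree

noncomputable def cFil (N M : ℕ) (Q : PTree → Prop) : Finset PTree :=
  @Finset.filter _ Q (Classical.decPred _) (allT N M)

lemma mem_cFil {N M : ℕ} {Q : PTree → Prop} {t : PTree} :
    t ∈ cFil N M Q ↔ t ∈ allT N M ∧ Q t := by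
  classical
  rw [cFil]
  simp [Finset.mem_filter]

lemma flipInv_ranked {m j : ℕ} {t t' : PTree} (h : Flip t t') :
    (IsRanked m t ∧ cherries t = j) → (IsRanked m t' ∧ cherries t' = j) := by
  rintro ⟨⟨hi, hl⟩, hc⟩
  exact ⟨⟨incr_flip h hi, (labels_flip h).symm.trans hl⟩, (cherries_flip h).symm.trans hc⟩

lemma flipInv_omega {ω m j : ℕ} {t t' : PTree} (h : Flip t t') :
    (IsRanked m t ∧ OmegaOK ω t ∧ cherries t = j) →
      (IsRanked m t' ∧ OmegaOK ω t' ∧ cherries t' = j) := by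
  rintro ⟨⟨hi, hl⟩, ho, hc⟩
  exact ⟨⟨incr_flip h hi, (labels_flip h).symm.trans hl⟩, omegaOK_flip h ho,
    (cherries_flip h).symm.trans hc⟩

lemma omegaCountC_eq (ω m j : ℕ) :
    omegaCountC ω m j = (cFil m (m + 1)
      (fun t => (IsRanked m t ∧ OmegaOK ω t ∧ cherries t = j) ∧ sort t = t)).card := by
  rw [omegaCountC, cFil]
  exact card_quot (fun h => flipInv_omega h)
    (fun t ht => ⟨(size_of_isRanked ht.1).le, labels_lt_of_isRanked ht.1⟩)

lemma rankedCountC_eq (m j : ℕ) :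
    rankedCountC m j = (cFil m (m + 1)
      (fun t => (IsRanked m t ∧ cherries t = j) ∧ sort t = t)).card := by
  rw [rankedCountC, cFil]
  exact card_quot (fun h => flipInv_ranked h)
    (fun t ht => ⟨(size_of_isRanked ht.1).le, labels_lt_of_isRanked ht.1⟩)

end PTree

namespace PTree

abbrev Gam : Type := Σ _ : ℕ, Σ _ : ℕ, Finset ℕ × PTree × PTree

noncomputable def fwd : PTree → Gam
  | leaf => ⟨0, 0, (∅, leaf, leaf)⟩
  | node _ a b =>
    if size a ≤ size b then
      ⟨size a, cherries a, ((labels a).toFinset,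
        mapl (down (labels b).toFinset) b, mapl (down (labels a).toFinset) a)⟩
    else
      ⟨size b, cherries b, ((labels b).toFinset,
        mapl (down (labels a).toFinset) a, mapl (down (labels b).toFinset) b)⟩

noncomputable def bwd (n : ℕ) (x : Gam) : PTree :=
  sort (node 1 (mapl (up (Finset.Icc 2 n \ x.2.2.1)) x.2.2.2.1)
    (mapl (up x.2.2.1) x.2.2.2.2))

lemma down_package {a : PTree} (hinc : Incr a) (hnd : (labels a).Nodup) (hcan : sort a = a) :
    IsRanked (labels a).toFinset.card (mapl (down (labels a).toFinset) a) ∧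
    sort (mapl (down (labels a).toFinset) a) = mapl (down (labels a).toFinset) a ∧
    mapl (up (labels a).toFinset) (mapl (down (labels a).toFinset) a) = a := by
  set S := (labels a).toFinset with hS
  have hSval : S.val = labels a := by
    rw [hS, Multiset.toFinset_val]; exact Multiset.dedup_eq_self.2 hnd
  have hmemS : ∀ m ∈ labels a, m ∈ S := fun m hm => Multiset.mem_toFinset.2 hm
  have hf : ∀ x ∈ labels a, ∀ y ∈ labels a, x < y → down S x < down S y :=
    fun x hx y hy h => down_lt (hmemS x hx) (hmemS y hy) h
  refine ⟨⟨incr_mapl hf hinc, ?_⟩, ?_, ?_⟩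
  · rw [labels_mapl, ← hSval, map_down_val]
  · rw [sort_mapl hf, hcan]
  · rw [mapl_mapl]
    exact mapl_id_of_labels (fun m hm => up_down (hmemS m hm))

lemma up_package {u : PTree} {S : Finset ℕ} (hu : IsRanked S.card u) (hcan : sort u = u) :
    Incr (mapl (up S) u) ∧ labels (mapl (up S) u) = S.val ∧
    sort (mapl (up S) u) = mapl (up S) u ∧
    mapl (down S) (mapl (up S) u) = u ∧ size (mapl (up S) u) = S.card := by
  have hlab : labels u = (Finset.Icc 1 S.card).val := hu.2
  have hmem : ∀ m ∈ labels u, m ∈ Finset.Icc 1 S.card := by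
    intro m hm; rw [hlab, Finset.mem_val] at hm; exact hm
  have hf : ∀ x ∈ labels u, ∀ y ∈ labels u, x < y → up S x < up S y :=
    fun x hx y hy h => up_lt (hmem x hx) (hmem y hy) h
  refine ⟨incr_mapl hf hu.1, ?_, ?_, ?_, ?_⟩
  · rw [labels_mapl, hlab, map_up_val]
  · rw [sort_mapl hf, hcan]
  · rw [mapl_mapl]
    exact mapl_id_of_labels (fun m hm => down_up (hmem m hm))
  · rw [size_mapl, size_of_isRanked hu]

lemma lhs_decomp {ω n l : ℕ} (hn : 2 * ω + 1 < n) {t : PTree}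
    (ht : t ∈ cFil n (n + 1)
      (fun t => (IsRanked n t ∧ OmegaOK ω t ∧ cherries t = l) ∧ sort t = t)) :
    ∃ a b, t = node 1 a b ∧ Incr a ∧ Incr b ∧
      (labels a).Nodup ∧ (labels b).Nodup ∧
      labels a + labels b = (Finset.Icc 2 n).val ∧
      sort a = a ∧ sort b = b ∧
      OmegaOK ω a ∧ OmegaOK ω b ∧ min (size a) (size b) ≤ ω ∧
      size a + size b = n - 1 ∧ cherries a + cherries b = l := by
  obtain ⟨hmem, ⟨⟨hinc, hlab⟩, hom, hch⟩, hcan⟩ := mem_cFil.1 ht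
  obtain ⟨a, b, rfl⟩ := root_one (by omega) ⟨hinc, hlab⟩
  have hlab2 : labels a + labels b = (Finset.Icc 2 n).val := by
    have : (1 : ℕ) ::ₘ (labels a + labels b) = 1 ::ₘ (Finset.Icc 2 n).val := by
      rw [← Icc_val_split (by omega), ← hlab]; rfl
    exact (Multiset.cons_inj_right _).1 this
  have hnodups : ((Finset.Icc 2 n).val).Nodup := (Finset.Icc 2 n).nodup
  obtain ⟨hna, hnb, _, _, _⟩ := nodup_split hnodups hlab2
  obtain ⟨hsa, hsb⟩ := canon_node hcan
  have hsize : size (node 1 a b) = n := size_of_isRanked ⟨hinc, hlab⟩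
  simp only [size] at hsize
  have hnotleaf : ¬(a = leaf ∧ b = leaf) := by
    rintro ⟨rfl, rfl⟩
    simp [size] at hsize
    omega
  have hcher : cherries a + cherries b = l := by
    rw [← cherries_node 1 hnotleaf]; exact hch
  exact ⟨a, b, rfl, hinc.2.2.1, hinc.2.2.2, hna, hnb, hlab2, hsa, hsb,
    hom.2.1, hom.2.2, hom.1, by omega, hcher⟩

end PTree

namespace PTree

noncomputable def sigF (ω n l : ℕ) : Finset Gam :=
  (Finset.range (ω + 1)).sigma (fun k =>
    ((Finset.range ((k + 1) / 2 + 1)).filter (· ≤ l)).sigma (fun j =>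
      (Finset.powersetCard k (Finset.Icc 2 n)) ×ˢ
        ((cFil (n - 1 - k) (n - 1 - k + 1)
          (fun t => (IsRanked (n - 1 - k) t ∧ OmegaOK ω t ∧ cherries t = l - j) ∧
            sort t = t)) ×ˢ
        (cFil k (k + 1) (fun t => (IsRanked k t ∧ cherries t = j) ∧ sort t = t)))))

lemma mem_sigF {ω n l : ℕ} {k j : ℕ} {S : Finset ℕ} {u v : PTree} :
    (⟨k, j, (S, u, v)⟩ : Gam) ∈ sigF ω n l ↔
      k ≤ ω ∧ j ≤ (k + 1) / 2 ∧ j ≤ l ∧ (S ⊆ Finset.Icc 2 n ∧ S.card = k) ∧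
      (u ∈ allT (n - 1 - k) (n - 1 - k + 1) ∧
        (IsRanked (n - 1 - k) u ∧ OmegaOK ω u ∧ cherries u = l - j) ∧ sort u = u) ∧
      (v ∈ allT k (k + 1) ∧ (IsRanked k v ∧ cherries v = j) ∧ sort v = v) := by
  simp only [sigF, Finset.mem_sigma, Finset.mem_product, Finset.mem_filter,
    Finset.mem_range, Finset.mem_powersetCard, mem_cFil]
  constructor
  · rintro ⟨h1, ⟨h2, h3⟩, h4, h5, h6⟩
    exact ⟨by omega, by omega, h3, h4, h5, h6⟩
  · rintro ⟨h1, h2, h3, h4, h5, h6⟩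
    exact ⟨by omega, ⟨by omega, h3⟩, h4, h5, h6⟩

lemma pack_mem {ω n l : ℕ} (hn : 2 * ω + 1 < n) {s bg : PTree}
    (hincs : Incr s) (hincb : Incr bg)
    (hns : (labels s).Nodup) (hnb : (labels bg).Nodup)
    (hlab : labels s + labels bg = (Finset.Icc 2 n).val)
    (hss : sort s = s) (hsb : sort bg = bg)
    (homb : OmegaOK ω bg)
    (hsize : size s + size bg = n - 1) (hcher : cherries s + cherries bg = l)
    (hsmall : size s ≤ ω) :
    (⟨size s, cherries s, ((labels s).toFinset,
      mapl (down (labels bg).toFinset) bg, mapl (down (labels s).toFinset) s)⟩ : Gam)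
      ∈ sigF ω n l := by
  have hSval : (labels s).toFinset.val = labels s := by
    rw [Multiset.toFinset_val]; exact Multiset.dedup_eq_self.2 hns
  have hTval : (labels bg).toFinset.val = labels bg := by
    rw [Multiset.toFinset_val]; exact Multiset.dedup_eq_self.2 hnb
  have hScard : (labels s).toFinset.card = size s := by
    rw [Finset.card_def, hSval, ← size_eq_labels_card]
  have hTcard : (labels bg).toFinset.card = n - 1 - size s := by
    rw [Finset.card_def, hTval, ← size_eq_labels_card]; omega
  obtain ⟨hrank_v, hcan_v, _⟩ := down_package hincs hns hss
  obtain ⟨hrank_u, hcan_u, _⟩ := down_package hincb hnb hsb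
  rw [hScard] at hrank_v
  rw [hTcard] at hrank_u
  refine mem_sigF.2 ⟨hsmall, ?_, ?_, ⟨?_, hScard⟩, ⟨?_, ⟨hrank_u, ?_, ?_⟩, hcan_u⟩,
    ⟨?_, ⟨hrank_v, ?_⟩, hcan_v⟩⟩
  · have := cherries_le s
    omega
  · omega
  · intro x hx
    rw [Multiset.mem_toFinset] at hx
    have : x ∈ labels s + labels bg := Multiset.mem_add.2 (Or.inl hx)
    rw [hlab, Finset.mem_val] at this
    exact this
  · exact mem_allT (by rw [size_mapl]; omega)
      (labels_lt_of_isRanked hrank_u)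
  · exact omegaOK_mapl _ homb
  · rw [cherries_mapl]; omega
  · exact mem_allT (le_of_eq (size_mapl _ _)) (labels_lt_of_isRanked hrank_v)
  · rw [cherries_mapl]

end PTree

namespace PTree

lemma omegaOK_of_size {ω : ℕ} {t : PTree} (h : size t ≤ ω) : OmegaOK ω t := by
  induction t with
  | leaf => trivial
  | node k a b iha ihb =>
    simp only [size] at h
    exact ⟨by omega, iha (by omega), ihb (by omega)⟩

lemma fwd_mem {ω n l : ℕ} (hn : 2 * ω + 1 < n) {t : PTree}
    (ht : t ∈ cFil n (n + 1)
      (fun t => (IsRanked n t ∧ OmegaOK ω t ∧ cherries t = l) ∧ sort t = t)) :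
    fwd t ∈ sigF ω n l := by
  obtain ⟨a, b, rfl, hinca, hincb, hna, hnb, hlab, hsa, hsb, homa, homb, hmin, hsize, hcher⟩ :=
    lhs_decomp hn ht
  by_cases hab : size a ≤ size b
  · have : fwd (node 1 a b) = ⟨size a, cherries a, ((labels a).toFinset,
        mapl (down (labels b).toFinset) b, mapl (down (labels a).toFinset) a)⟩ := by
      simp only [fwd, if_pos hab]
    rw [this]
    refine pack_mem hn hinca hincb hna hnb hlab hsa hsb homb hsize hcher ?_
    have : min (size a) (size b) = size a := min_eq_left hab
    omega
  · have : fwd (node 1 a b) = ⟨size b, cherries b, ((labels b).toFinset,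
        mapl (down (labels a).toFinset) a, mapl (down (labels b).toFinset) b)⟩ := by
      simp only [fwd, if_neg hab]
    rw [this]
    refine pack_mem hn hincb hinca hnb hna ?_ hsb hsa homa (by omega) (by omega) ?_
    · rw [add_comm]; exact hlab
    · have : min (size a) (size b) = size b := min_eq_right (by omega)
      omega

end PTree

namespace PTree

lemma bwd_mem {ω n l : ℕ} (hn : 2 * ω + 1 < n) {x : Gam} (hx : x ∈ sigF ω n l) :
    bwd n x ∈ cFil n (n + 1)
      (fun t => (IsRanked n t ∧ OmegaOK ω t ∧ cherries t = l) ∧ sort t = t) := by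
  obtain ⟨k, j, S, u, v⟩ := x
  obtain ⟨hk, hj2, hjl, ⟨hsub, hScard⟩, ⟨humem, ⟨hranku, homu, hcheru⟩, hcanu⟩,
    ⟨hvmem, ⟨hrankv, hcherv⟩, hcanv⟩⟩ := mem_sigF.1 hx
  set T := Finset.Icc 2 n \ S with hT
  have hIccCard : (Finset.Icc 2 n).card = n - 1 := by rw [Nat.card_Icc]; omega
  have hTcard : T.card = n - 1 - k := by
    rw [hT, Finset.card_sdiff_of_subset hsub, hIccCard, hScard]
  have hranku' : IsRanked T.card u := by rw [hTcard]; exact hranku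
  have hrankv' : IsRanked S.card v := by rw [hScard]; exact hrankv
  obtain ⟨hincB, hlabB, hcanB, _, hsizeB⟩ := up_package hranku' hcanu
  obtain ⟨hincS, hlabS, hcanS, _, hsizeS⟩ := up_package hrankv' hcanv
  have hbwd : bwd n ⟨k, j, (S, u, v)⟩ = sort (node 1 (mapl (up T) u) (mapl (up S) v)) := rfl
  set B' := mapl (up T) u
  set S' := mapl (up S) v
  set w := node 1 B' S' with hw
  have hlabw : labels w = (Finset.Icc 1 n).val := by
    rw [hw]
    show (1 : ℕ) ::ₘ (labels B' + labels S') = _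
    rw [hlabB, hlabS, sdiff_val_add hsub, Icc_val_split (by omega)]
  have hincw : Incr w := by
    refine ⟨?_, ?_, hincB, hincS⟩
    · intro m hm
      rw [hlabB, Finset.mem_val, hT, Finset.mem_sdiff, Finset.mem_Icc] at hm
      omega
    · intro m hm
      rw [hlabS, Finset.mem_val] at hm
      have := Finset.mem_Icc.1 (hsub hm)
      omega
  have homw : OmegaOK ω w := by
    refine ⟨?_, omegaOK_mapl _ homu, ?_⟩
    · rw [hsizeB, hsizeS, hTcard, hScard]
      have : min (n - 1 - k) k = k := min_eq_right (by omega)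
      omega
    · exact omegaOK_mapl _ (omegaOK_of_size (by rw [size_of_isRanked hrankv]; omega))
  have hcherw : cherries w = l := by
    have hnl : ¬(B' = leaf ∧ S' = leaf) := by
      rintro ⟨hB, _⟩
      have := hsizeB
      rw [hB] at this
      simp [size] at this
      omega
    rw [hw, cherries_node 1 hnl, cherries_mapl, cherries_mapl, hcheru, hcherv]
    omega
  have hP : IsRanked n w ∧ OmegaOK ω w ∧ cherries w = l := ⟨⟨hincw, hlabw⟩, homw, hcherw⟩
  have hPs : IsRanked n (sort w) ∧ OmegaOK ω (sort w) ∧ cherries (sort w) = l :=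
    (eqvGen_iff (fun h => flipInv_omega h) (eqvGen_sort w)).1 hP
  rw [hbwd]
  exact mem_cFil.2 ⟨mem_allT (le_of_eq (size_of_isRanked hPs.1))
    (labels_lt_of_isRanked hPs.1), hPs, sort_idem w⟩

end PTree

namespace PTree

lemma bwd_fwd {ω n l : ℕ} (hn : 2 * ω + 1 < n) {t : PTree}
    (ht : t ∈ cFil n (n + 1)
      (fun t => (IsRanked n t ∧ OmegaOK ω t ∧ cherries t = l) ∧ sort t = t)) :
    bwd n (fwd t) = t := by
  have hcan : sort t = t := (mem_cFil.1 ht).2.2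
  obtain ⟨a, b, rfl, hinca, hincb, hna, hnb, hlab, hsa, hsb, homa, homb, hmin, hsize, hcher⟩ :=
    lhs_decomp hn ht
  have hnodups : ((Finset.Icc 2 n).val).Nodup := (Finset.Icc 2 n).nodup
  have hvt : ((Finset.Icc 2 n).val).toFinset = Finset.Icc 2 n := Finset.val_toFinset _
  by_cases hab : size a ≤ size b
  · have hfwd : fwd (node 1 a b) = ⟨size a, cherries a, ((labels a).toFinset,
        mapl (down (labels b).toFinset) b, mapl (down (labels a).toFinset) a)⟩ := by
      simp only [fwd, if_pos hab]
    obtain ⟨_, _, _, _, hTb⟩ := nodup_split hnodups hlab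
    rw [hvt] at hTb
    obtain ⟨_, _, hida⟩ := down_package hinca hna hsa
    obtain ⟨_, _, hidb⟩ := down_package hincb hnb hsb
    rw [hfwd]
    show sort (node 1 (mapl (up (Finset.Icc 2 n \ (labels a).toFinset))
      (mapl (down (labels b).toFinset) b)) (mapl (up (labels a).toFinset)
      (mapl (down (labels a).toFinset) a))) = node 1 a b
    rw [← hTb, hidb, hida]
    have : sort (node 1 b a) = sort (node 1 a b) := sort_flip (Flip.swap 1 b a)
    rw [this, hcan]
  · have hfwd : fwd (node 1 a b) = ⟨size b, cherries b, ((labels b).toFinset,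
        mapl (down (labels a).toFinset) a, mapl (down (labels b).toFinset) b)⟩ := by
      simp only [fwd, if_neg hab]
    have hlab' : labels b + labels a = (Finset.Icc 2 n).val := by rw [add_comm]; exact hlab
    obtain ⟨_, _, _, _, hTa⟩ := nodup_split hnodups hlab'
    rw [hvt] at hTa
    obtain ⟨_, _, hida⟩ := down_package hinca hna hsa
    obtain ⟨_, _, hidb⟩ := down_package hincb hnb hsb
    rw [hfwd]
    show sort (node 1 (mapl (up (Finset.Icc 2 n \ (labels b).toFinset))
      (mapl (down (labels a).toFinset) a)) (mapl (up (labels b).toFinset)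
      (mapl (down (labels b).toFinset) b))) = node 1 a b
    rw [← hTa, hida, hidb, hcan]

lemma fwd_bwd {ω n l : ℕ} (hn : 2 * ω + 1 < n) {x : Gam} (hx : x ∈ sigF ω n l) :
    fwd (bwd n x) = x := by
  obtain ⟨k, j, S, u, v⟩ := x
  obtain ⟨hk, hj2, hjl, ⟨hsub, hScard⟩, ⟨humem, ⟨hranku, homu, hcheru⟩, hcanu⟩,
    ⟨hvmem, ⟨hrankv, hcherv⟩, hcanv⟩⟩ := mem_sigF.1 hx
  set T := Finset.Icc 2 n \ S with hT
  have hIccCard : (Finset.Icc 2 n).card = n - 1 := by rw [Nat.card_Icc]; omega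
  have hTcard : T.card = n - 1 - k := by
    rw [hT, Finset.card_sdiff_of_subset hsub, hIccCard, hScard]
  have hranku' : IsRanked T.card u := by rw [hTcard]; exact hranku
  have hrankv' : IsRanked S.card v := by rw [hScard]; exact hrankv
  obtain ⟨hincB, hlabB, hcanB, hidB, hsizeB⟩ := up_package hranku' hcanu
  obtain ⟨hincS, hlabS, hcanS, hidS, hsizeS⟩ := up_package hrankv' hcanv
  set B' := mapl (up T) u with hB'
  set S' := mapl (up S) v with hS'
  have hbwd : bwd n ⟨k, j, (S, u, v)⟩ = sort (node 1 B' S') := rfl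
  have hsize_lt : size S' < size B' := by
    rw [hsizeB, hsizeS, hTcard, hScard]; omega
  have htofS : (labels S').toFinset = S := by rw [hlabS, Finset.val_toFinset]
  have htofB : (labels B').toFinset = T := by rw [hlabB, Finset.val_toFinset]
  have hsortw : sort (node 1 B' S') = node 1 B' S' ∨
      sort (node 1 B' S') = node 1 S' B' := by
    rw [sort]
    simp only [hcanB, hcanS]
    by_cases hc : flat B' ≤ flat S'
    · rw [if_pos hc]; exact Or.inl rfl
    · rw [if_neg hc]; exact Or.inr rfl
  have key : ∀ w, w = node 1 B' S' ∨ w = node 1 S' B' → fwd w = ⟨k, j, (S, u, v)⟩ := by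
    rintro w (rfl | rfl)
    · have : fwd (node 1 B' S') = ⟨size S', cherries S', ((labels S').toFinset,
          mapl (down (labels B').toFinset) B', mapl (down (labels S').toFinset) S')⟩ := by
        simp only [fwd, if_neg (by omega : ¬ size B' ≤ size S')]
      rw [this, htofS, htofB, hidB, hidS, hsizeS, hScard]
      rw [hS', cherries_mapl, hcherv]
    · have : fwd (node 1 S' B') = ⟨size S', cherries S', ((labels S').toFinset,
          mapl (down (labels B').toFinset) B', mapl (down (labels S').toFinset) S')⟩ := by
        simp only [fwd, if_pos (le_of_lt hsize_lt)]
      rw [this, htofS, htofB, hidB, hidS, hsizeS, hScard]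
      rw [hS', cherries_mapl, hcherv]
  rw [hbwd]
  exact key _ hsortw

end PTree


/-- for `n > 2ω+1` and any `l ≥ 0`,
`|Ω^ω_{n,l}| = ∑_{k=0}^{ω} ∑_{j=0}^{⌈k/2⌉} C(n-1,k) |Ω^ω_{n-1-k, l-j}| e_{k,j}`,
with the convention `|Ω^ω_{m,j}| = 0` for `j < 0` (the `if` below). Here
`⌈k/2⌉ = (k+1)/2` in natural-number arithmetic. -/
theorem omegaCountC_recursion (ω n l : ℕ) (hn : 2 * ω + 1 < n) :
    omegaCountC ω n l =
      ∑ k ∈ Finset.range (ω + 1), ∑ j ∈ Finset.range ((k + 1) / 2 + 1),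
        Nat.choose (n - 1) k *
          (if j ≤ l then omegaCountC ω (n - 1 - k) (l - j) else 0) *
          rankedCountC k j := by
  classical
  rw [PTree.omegaCountC_eq]
  rw [Finset.card_bij' (fun t _ => PTree.fwd t) (fun x _ => PTree.bwd n x)
    (fun t ht => PTree.fwd_mem hn ht) (fun x hx => PTree.bwd_mem hn hx)
    (fun t ht => PTree.bwd_fwd hn ht) (fun x hx => PTree.fwd_bwd hn hx)]
  rw [PTree.sigF, Finset.card_sigma]
  refine Finset.sum_congr rfl (fun k hk => ?_)
  rw [Finset.card_sigma]
  have hstep : ∀ j ∈ (Finset.range ((k + 1) / 2 + 1)).filter (· ≤ l),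
      ((Finset.powersetCard k (Finset.Icc 2 n)) ×ˢ
        ((PTree.cFil (n - 1 - k) (n - 1 - k + 1)
          (fun t => (PTree.IsRanked (n - 1 - k) t ∧ PTree.OmegaOK ω t ∧
            t.cherries = l - j) ∧ t.sort = t)) ×ˢ
        (PTree.cFil k (k + 1)
          (fun t => (PTree.IsRanked k t ∧ t.cherries = j) ∧ t.sort = t)))).card =
      Nat.choose (n - 1) k * omegaCountC ω (n - 1 - k) (l - j) * rankedCountC k j := by
    intro j hj
    rw [Finset.card_product, Finset.card_product, Finset.card_powersetCard, Nat.card_Icc,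
      ← PTree.omegaCountC_eq, ← PTree.rankedCountC_eq]
    have : n + 1 - 2 = n - 1 := by omega
    rw [this, mul_assoc]
  rw [Finset.sum_congr rfl hstep, Finset.sum_filter]
  refine Finset.sum_congr rfl (fun j hj => ?_)
  by_cases hjl : j ≤ l
  · rw [if_pos hjl, if_pos hjl]
  · rw [if_neg hjl, if_neg hjl, mul_zero, zero_mul]
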